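/- Let P^{U0}_j denote the distribution on X_j that assigns probability 0 to the symbol 0 and probability 1/(r_j−1) to each nonzero symbol, j = 1,2. For the product input distribution P = P^{U0}_1 × P^{U0}_2, the rate pair R*_2 is attained: I_P(X_1;Y_2|X_2) = C_{1,1} and I_P(X_2;Y_1|X_1) = C_{2,1}. -/

import Mathlib

open Real BigOperators Finset

/-- Entropy of a finite probability vector, with the convention `0 * log 0 = 0`
(automatic since `Real.log 0 = 0`). -/
noncomputable def ent {n : ℕ} (p : Fin n → ℝ) : ℝ := -∑ y, p y * Real.log (p y)

/-- `Q` is a probability distribution on `Fin n`. -/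
def IsProbDist {n : ℕ} (Q : Fin n → ℝ) : Prop := (∀ x, 0 ≤ Q x) ∧ ∑ x, Q x = 1

/-- `P` is a joint probability distribution. -/
def IsJointProbDist {m n : ℕ} (P : Fin m → Fin n → ℝ) : Prop :=
  (∀ x1 x2, 0 ≤ P x1 x2) ∧ ∑ x1, ∑ x2, P x1 x2 = 1

/-- First marginal `P_1`. -/
noncomputable def marg1 {m n : ℕ} (P : Fin m → Fin n → ℝ) (x1 : Fin m) : ℝ := ∑ x2, P x1 x2

/-- Second marginal `P_2`. -/
noncomputable def marg2 {m n : ℕ} (P : Fin m → Fin n → ℝ) (x2 : Fin n) : ℝ := ∑ x1, P x1 x2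

/-- Conditional mutual information `I_P(X₁;Y₂|X₂)`; terms with
`P x1 x2 * W2 x1 x2 y2 = 0` vanish, and summands with `marg2 P x2 = 0` vanish
since then `P x1 x2 = 0`. -/
noncomputable def condMI1 {m n t : ℕ} (P : Fin m → Fin n → ℝ)
    (W2 : Fin m → Fin n → Fin t → ℝ) : ℝ :=
  ∑ x2, ∑ x1, ∑ y2, P x1 x2 * W2 x1 x2 y2 *
    Real.log (W2 x1 x2 y2 / ((∑ x1', P x1' x2 * W2 x1' x2 y2) / marg2 P x2))

/-- Conditional mutual information `I_P(X₂;Y₁|X₁)`. -/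
noncomputable def condMI2 {m n t : ℕ} (P : Fin m → Fin n → ℝ)
    (W1 : Fin m → Fin n → Fin t → ℝ) : ℝ :=
  ∑ x1, ∑ x2, ∑ y1, P x1 x2 * W1 x1 x2 y1 *
    Real.log (W1 x1 x2 y1 / ((∑ x2', P x1 x2' * W1 x1 x2' y1) / marg1 P x1))

/-- Structural assumptions of a generalized push-to-talk two-way channel with
input alphabets `Fin (r1+3)`, `Fin (r2+3)` and output alphabets `Fin (s1+2)`,
`Fin (s2+2)`: both marginal channels are transition matrices; the row of
input `0` of each user is uniform; for each state, the nonzero-input rows are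
permutations of the row of input `1` and have constant column sums
(weak symmetry). -/
def GenPTT {r1 r2 s1 s2 : ℕ} (W1 : Fin (r1 + 3) → Fin (r2 + 3) → Fin (s1 + 2) → ℝ)
    (W2 : Fin (r1 + 3) → Fin (r2 + 3) → Fin (s2 + 2) → ℝ) : Prop :=
  (∀ x1 x2 y1, 0 ≤ W1 x1 x2 y1) ∧ (∀ x1 x2 y2, 0 ≤ W2 x1 x2 y2) ∧
  (∀ x1 x2, ∑ y1, W1 x1 x2 y1 = 1) ∧ (∀ x1 x2, ∑ y2, W2 x1 x2 y2 = 1) ∧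
  (∀ x2 y2, W2 0 x2 y2 = 1 / ((s2 : ℝ) + 2)) ∧
  (∀ x2, ∀ x1 : Fin (r1 + 3), x1 ≠ 0 →
    ∃ σ : Equiv.Perm (Fin (s2 + 2)), ∀ y2, W2 x1 x2 y2 = W2 1 x2 (σ y2)) ∧
  (∀ x2, ∀ y2 y2' : Fin (s2 + 2),
    ∑ x1 ∈ Finset.univ.filter (fun x1 => x1 ≠ (0 : Fin (r1 + 3))), W2 x1 x2 y2 =
    ∑ x1 ∈ Finset.univ.filter (fun x1 => x1 ≠ (0 : Fin (r1 + 3))), W2 x1 x2 y2') ∧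
  (∀ x1 y1, W1 x1 0 y1 = 1 / ((s1 : ℝ) + 2)) ∧
  (∀ x1, ∀ x2 : Fin (r2 + 3), x2 ≠ 0 →
    ∃ σ : Equiv.Perm (Fin (s1 + 2)), ∀ y1, W1 x1 x2 y1 = W1 x1 1 (σ y1)) ∧
  (∀ x1, ∀ y1 y1' : Fin (s1 + 2),
    ∑ x2 ∈ Finset.univ.filter (fun x2 => x2 ≠ (0 : Fin (r2 + 3))), W1 x1 x2 y1 =
    ∑ x2 ∈ Finset.univ.filter (fun x2 => x2 ≠ (0 : Fin (r2 + 3))), W1 x1 x2 y1')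

/-- `C_{1,x₂} = log s₂ − H(row of input 1 of Q_{1,x₂})`. -/
noncomputable def C1 {r1 r2 s2 : ℕ} (W2 : Fin (r1 + 3) → Fin (r2 + 3) → Fin (s2 + 2) → ℝ)
    (x2 : Fin (r2 + 3)) : ℝ := Real.log ((s2 : ℝ) + 2) - ent (fun y2 => W2 1 x2 y2)

/-- `C_{2,x₁} = log s₁ − H(row of input 1 of Q_{2,x₁})`. -/
noncomputable def C2 {r1 r2 s1 : ℕ} (W1 : Fin (r1 + 3) → Fin (r2 + 3) → Fin (s1 + 2) → ℝ)
    (x1 : Fin (r1 + 3)) : ℝ := Real.log ((s1 : ℝ) + 2) - ent (fun y1 => W1 x1 1 y1)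

/-- The channel symmetry property: `C_{1,x₂} = C_{1,1}` for all `x₂ ≠ 0` and
`C_{2,x₁} = C_{2,1}` for all `x₁ ≠ 0`. -/
def SymProp {r1 r2 s1 s2 : ℕ} (W1 : Fin (r1 + 3) → Fin (r2 + 3) → Fin (s1 + 2) → ℝ)
    (W2 : Fin (r1 + 3) → Fin (r2 + 3) → Fin (s2 + 2) → ℝ) : Prop :=
  (∀ x2 : Fin (r2 + 3), x2 ≠ 0 → C1 W2 x2 = C1 W2 1) ∧
  (∀ x1 : Fin (r1 + 3), x1 ≠ 0 → C2 W1 x1 = C2 W1 1)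

lemma sum_ite_ne (k : ℕ) (c : ℝ) :
    ∑ x : Fin (k+3), (if x = 0 then (0:ℝ) else c) = ((k:ℝ)+2) * c := by
  have h : ∀ x : Fin (k+3), (if x = 0 then (0:ℝ) else c) = c - (if x = 0 then c else 0) := by
    intro x; by_cases h : x = 0 <;> simp [h]
  simp_rw [h]
  rw [Finset.sum_sub_distrib, Finset.sum_const,
    Finset.sum_ite_eq' Finset.univ (0 : Fin (k+3)) (fun _ => c)]
  simp [Finset.card_univ]
  ring

lemma mul_log_mul (a c : ℝ) (ha : 0 ≤ a) (hc : 0 < c) :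
    a * Real.log (a * c) = a * Real.log a + a * Real.log c := by
  rcases ha.eq_or_lt with h | h
  · simp [← h]
  · rw [Real.log_mul h.ne' hc.ne']; ring

lemma card_ne' (k : ℕ) :
    (((Finset.univ.filter (fun x => x ≠ (0 : Fin (k+3)))).card : ℕ) : ℝ) = (k:ℝ)+2 := by
  rw [Finset.filter_ne', Finset.card_erase_of_mem (Finset.mem_univ _)]
  simp [Finset.card_univ]

lemma key (m n t : ℕ) (P : Fin (m+3) → Fin (n+3) → ℝ)
    (hP : ∀ b a, P b a =
      (if b = 0 then (0:ℝ) else ((m:ℝ)+2)⁻¹) * (if a = 0 then (0:ℝ) else ((n:ℝ)+2)⁻¹))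
    (V : Fin (m+3) → Fin (n+3) → Fin (t+2) → ℝ)
    (hpos : ∀ x1 x2 y, 0 ≤ V x1 x2 y)
    (hrow : ∀ x1 x2, ∑ y, V x1 x2 y = 1)
    (hperm : ∀ x2, ∀ x1 : Fin (m+3), x1 ≠ 0 →
      ∃ σ : Equiv.Perm (Fin (t+2)), ∀ y, V x1 x2 y = V 1 x2 (σ y))
    (hcol : ∀ x2, ∀ y y' : Fin (t+2),
      ∑ x1 ∈ Finset.univ.filter (fun x1 => x1 ≠ (0 : Fin (m+3))), V x1 x2 y =
      ∑ x1 ∈ Finset.univ.filter (fun x1 => x1 ≠ (0 : Fin (m+3))), V x1 x2 y')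
    (hsym : ∀ x2 : Fin (n+3), x2 ≠ 0 →
      ent (fun y => V 1 x2 y) = ent (fun y => V 1 1 y)) :
    condMI1 P V = Real.log ((t:ℝ)+2) - ent (fun y => V 1 1 y) := by
  have hPe : P = fun b a =>
      (if b = 0 then (0:ℝ) else ((m:ℝ)+2)⁻¹) * (if a = 0 then (0:ℝ) else ((n:ℝ)+2)⁻¹) :=
    funext fun b => funext fun a => hP b a
  subst hPe
  have hm : (0:ℝ) < (m:ℝ)+2 := by positivity
  have hn : (0:ℝ) < (n:ℝ)+2 := by positivity
  have ht : (0:ℝ) < (t:ℝ)+2 := by positivity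
  set cm : ℝ := ((m:ℝ)+2)⁻¹ with hcm
  set cn : ℝ := ((n:ℝ)+2)⁻¹ with hcn
  -- column sums
  have hS : ∀ x2 (y : Fin (t+2)),
      ∑ x1 ∈ Finset.univ.filter (fun x1 => x1 ≠ (0 : Fin (m+3))), V x1 x2 y
        = ((m:ℝ)+2)/((t:ℝ)+2) := by
    intro x2 y
    have h1 : ∑ y' : Fin (t+2),
        ∑ x1 ∈ Finset.univ.filter (fun x1 => x1 ≠ (0 : Fin (m+3))), V x1 x2 y' = (m:ℝ)+2 := by
      rw [Finset.sum_comm]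
      simp_rw [hrow]
      rw [Finset.sum_const, nsmul_eq_mul, mul_one, card_ne']
    have h2 : ∑ y' : Fin (t+2),
        ∑ x1 ∈ Finset.univ.filter (fun x1 => x1 ≠ (0 : Fin (m+3))), V x1 x2 y'
        = ((t:ℝ)+2) * ∑ x1 ∈ Finset.univ.filter (fun x1 => x1 ≠ (0 : Fin (m+3))), V x1 x2 y := by
      rw [Finset.sum_congr rfl (fun y' _ => hcol x2 y' y), Finset.sum_const, nsmul_eq_mul]
      simp [Finset.card_univ]
    rw [h2] at h1
    field_simp
    linarith
  -- marginal
  have hmarg : ∀ x2 : Fin (n+3),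
      marg2 (fun (b : Fin (m+3)) (a : Fin (n+3)) => (if b = 0 then (0:ℝ) else cm) * (if a = 0 then (0:ℝ) else cn)) x2
        = (if x2 = 0 then (0:ℝ) else cn) := by
    intro x2
    unfold marg2
    rw [← Finset.sum_mul, sum_ite_ne]
    rw [hcm]
    field_simp
  -- output distribution is uniform
  have hout : ∀ x2 : Fin (n+3), x2 ≠ 0 → ∀ y : Fin (t+2),
      (∑ x1' : Fin (m+3), ((if x1' = 0 then (0:ℝ) else cm) * (if x2 = 0 then (0:ℝ) else cn)) * V x1' x2 y)
        / marg2 (fun (b : Fin (m+3)) (a : Fin (n+3)) => (if b = 0 then (0:ℝ) else cm) * (if a = 0 then (0:ℝ) else cn)) x2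
      = ((t:ℝ)+2)⁻¹ := by
    intro x2 hx2 y
    rw [hmarg, if_neg hx2]
    have hsum : (∑ x1' : Fin (m+3),
        (if x1' = 0 then (0:ℝ) else cm) * cn * V x1' x2 y)
        = cn * cm * (((m:ℝ)+2)/((t:ℝ)+2)) := by
      rw [← hS x2 y, Finset.mul_sum, Finset.sum_filter]
      refine Finset.sum_congr rfl fun x1 _ => ?_
      by_cases h : x1 = 0
      · simp [h]
      · simp only [h, if_false, if_neg, ne_eq, not_false_eq_true, if_true]
        ring
    rw [hsum, hcm, hcn]
    field_simp
  -- per-row entropy computation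
  have hy : ∀ x2 : Fin (n+3), x2 ≠ 0 → ∀ x1 : Fin (m+3), x1 ≠ 0 →
      ∑ y, (V x1 x2 y * Real.log (V x1 x2 y) + V x1 x2 y * Real.log ((t:ℝ)+2))
        = Real.log ((t:ℝ)+2) - ent (fun y => V 1 1 y) := by
    intro x2 hx2 x1 hx1
    rw [Finset.sum_add_distrib, ← Finset.sum_mul, hrow, one_mul]
    have hp : ∑ y, V x1 x2 y * Real.log (V x1 x2 y)
        = ∑ y, V 1 x2 y * Real.log (V 1 x2 y) := by
      obtain ⟨σ, hσ⟩ := hperm x2 x1 hx1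
      simp_rw [hσ]
      exact Equiv.sum_comp σ (fun y => V 1 x2 y * Real.log (V 1 x2 y))
    have hsy := hsym x2 hx2
    unfold ent at hsy ⊢
    rw [hp]
    linarith
  have main : condMI1 (fun (b : Fin (m+3)) (a : Fin (n+3)) =>
        (if b = 0 then (0:ℝ) else cm) * (if a = 0 then (0:ℝ) else cn)) V
      = ∑ x2 : Fin (n+3), ∑ x1 : Fin (m+3),
          (if x1 = 0 ∨ x2 = 0 then (0:ℝ)
           else cm * cn * (Real.log ((t:ℝ)+2) - ent (fun y => V 1 1 y))) := by
    unfold condMI1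
    refine Finset.sum_congr rfl fun x2 _ => Finset.sum_congr rfl fun x1 _ => ?_
    by_cases h1 : x1 = 0
    · simp [h1]
    by_cases h2 : x2 = 0
    · simp [h2]
    rw [if_neg (by tauto)]
    have hterm : ∀ y : Fin (t+2),
        ((if x1 = 0 then (0:ℝ) else cm) * (if x2 = 0 then (0:ℝ) else cn)) * V x1 x2 y *
          Real.log (V x1 x2 y /
            ((∑ x1' : Fin (m+3), ((if x1' = 0 then (0:ℝ) else cm) * (if x2 = 0 then (0:ℝ) else cn)) * V x1' x2 y) /
              marg2 (fun (b : Fin (m+3)) (a : Fin (n+3)) =>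
                (if b = 0 then (0:ℝ) else cm) * (if a = 0 then (0:ℝ) else cn)) x2))
        = cm * cn * (V x1 x2 y * Real.log (V x1 x2 y) + V x1 x2 y * Real.log ((t:ℝ)+2)) := by
      intro y
      rw [hout x2 h2 y, div_eq_mul_inv, inv_inv, if_neg h1, if_neg h2]
      linear_combination (cm * cn) * mul_log_mul (V x1 x2 y) ((t:ℝ)+2) (hpos x1 x2 y) ht
    rw [Finset.sum_congr rfl (fun y _ => hterm y), ← Finset.mul_sum, hy x2 h2 x1 h1]
  rw [main]
  have hinner : ∀ x2 : Fin (n+3),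
      ∑ x1 : Fin (m+3), (if x1 = 0 ∨ x2 = 0 then (0:ℝ)
          else cm * cn * (Real.log ((t:ℝ)+2) - ent (fun y => V 1 1 y)))
      = if x2 = 0 then (0:ℝ)
        else ((m:ℝ)+2) * (cm * cn * (Real.log ((t:ℝ)+2) - ent (fun y => V 1 1 y))) := by
    intro x2
    by_cases h2 : x2 = 0
    · simp [h2]
    · rw [if_neg h2]
      simp only [h2, or_false]
      exact sum_ite_ne m _
  rw [Finset.sum_congr rfl (fun x2 _ => hinner x2), sum_ite_ne n _, hcm, hcn]
  field_simp


/-- The rate pair `R*₂ = (C₁₁, C₂₁)` is attained by the product of the two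
distributions that are uniform on the nonzero symbols. -/
theorem stmt12 (r1 r2 s1 s2 : ℕ)
    (W1 : Fin (r1 + 3) → Fin (r2 + 3) → Fin (s1 + 2) → ℝ)
    (W2 : Fin (r1 + 3) → Fin (r2 + 3) → Fin (s2 + 2) → ℝ)
    (hW : GenPTT W1 W2) (hSym : SymProp W1 W2) :
    condMI1 (fun x1 x2 => (if x1 = 0 then (0 : ℝ) else ((r1 : ℝ) + 2)⁻¹) *
        (if x2 = 0 then (0 : ℝ) else ((r2 : ℝ) + 2)⁻¹)) W2 = C1 W2 1 ∧
    condMI2 (fun x1 x2 => (if x1 = 0 then (0 : ℝ) else ((r1 : ℝ) + 2)⁻¹) *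
        (if x2 = 0 then (0 : ℝ) else ((r2 : ℝ) + 2)⁻¹)) W1 = C2 W1 1 := by
  obtain ⟨hW1pos, hW2pos, hW1row, hW2row, hW2zero, hW2perm, hW2col, hW1zero, hW1perm, hW1col⟩ := hW
  obtain ⟨hsym1, hsym2⟩ := hSym
  constructor
  · have h := key r1 r2 s2
      (fun x1 x2 => (if x1 = 0 then (0 : ℝ) else ((r1 : ℝ) + 2)⁻¹) *
        (if x2 = 0 then (0 : ℝ) else ((r2 : ℝ) + 2)⁻¹))
      (fun _ _ => rfl) W2 hW2pos hW2row hW2perm hW2col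
      (fun x2 hx2 => by have h := hsym1 x2 hx2; unfold C1 at h; linarith)
    rw [h]
    rfl
  · have heq : condMI2 (fun x1 x2 => (if x1 = 0 then (0 : ℝ) else ((r1 : ℝ) + 2)⁻¹) *
        (if x2 = 0 then (0 : ℝ) else ((r2 : ℝ) + 2)⁻¹)) W1
      = condMI1 (fun (a : Fin (r2 + 3)) (b : Fin (r1 + 3)) =>
          (if b = 0 then (0 : ℝ) else ((r1 : ℝ) + 2)⁻¹) *
            (if a = 0 then (0 : ℝ) else ((r2 : ℝ) + 2)⁻¹))
          (fun (a : Fin (r2 + 3)) (b : Fin (r1 + 3)) (y : Fin (s1 + 2)) => W1 b a y) := rfl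
    rw [heq]
    have h := key r2 r1 s1
      (fun (a : Fin (r2 + 3)) (b : Fin (r1 + 3)) =>
        (if b = 0 then (0 : ℝ) else ((r1 : ℝ) + 2)⁻¹) *
          (if a = 0 then (0 : ℝ) else ((r2 : ℝ) + 2)⁻¹))
      (fun _ _ => mul_comm _ _)
      (fun (a : Fin (r2 + 3)) (b : Fin (r1 + 3)) (y : Fin (s1 + 2)) => W1 b a y)
      (fun a b y => hW1pos b a y) (fun a b => hW1row b a)
      (fun b a ha => hW1perm b a ha) hW1col
      (fun b hb => by have h := hsym2 b hb; unfold C2 at h; linarith)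
    rw [h]
    rfl
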